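/- Let (R,e) be a D*-ring and let ε̄ and μ̄ be two K-bases of D. Then the D*-polynomial rings R{x̄}_{D*}^{ε̄} and R{x̄}_{D*}^{μ̄} are isomorphic as (R,e)-algebras. -/

import Mathlib

open scoped TensorProduct BigOperators
open MvPolynomial

namespace DStarAux

variable {K R : Type} [Field K] [CommRing R] [Algebra K R] {m : ℕ} {ι : Type}

/-- The `K`-linear map sending a polynomial `q ∈ K[Y₀,…,Yₘ]` to the corresponding
`K`-linear combination of the variables `X (i, σ)`. -/
noncomputable def LmapFun (i : ι) (q : MvPolynomial (Fin (m + 1)) K) :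
    MvPolynomial (ι × (Fin (m + 1) → ℕ)) R :=
  Finsupp.sum (AddMonoidAlgebra.coeff q) fun d a => a • X (i, ⇑d)

lemma LmapFun_monomial (i : ι) (d : Fin (m + 1) →₀ ℕ) (a : K) :
    (LmapFun i (monomial d a) : MvPolynomial (ι × (Fin (m + 1) → ℕ)) R) = a • X (i, ⇑d) := by
  rw [LmapFun, ← single_eq_monomial]
  exact Finsupp.sum_single_index (zero_smul K _)

lemma LmapFun_add (i : ι) (p q : MvPolynomial (Fin (m + 1)) K) :
    (LmapFun i (p + q) : MvPolynomial (ι × (Fin (m + 1) → ℕ)) R) =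
      LmapFun i p + LmapFun i q :=
  Finsupp.sum_add_index' (fun d => zero_smul K _) (fun d a b => add_smul a b _)

lemma LmapFun_smul (i : ι) (c : K) (q : MvPolynomial (Fin (m + 1)) K) :
    (LmapFun i (c • q) : MvPolynomial (ι × (Fin (m + 1) → ℕ)) R) = c • LmapFun i q := by
  induction q using MvPolynomial.induction_on' with
  | monomial d a => rw [smul_monomial, LmapFun_monomial, LmapFun_monomial, smul_eq_mul, mul_smul]
  | add p q hp hq => rw [smul_add, LmapFun_add, LmapFun_add, hp, hq, smul_add]

/-- The `K`-linear map sending a polynomial `q ∈ K[Y₀,…,Yₘ]` to the corresponding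
`K`-linear combination of the variables `X (i, σ)`. -/
noncomputable def Lmap (i : ι) :
    MvPolynomial (Fin (m + 1)) K →ₗ[K] MvPolynomial (ι × (Fin (m + 1) → ℕ)) R where
  toFun := LmapFun i
  map_add' := LmapFun_add i
  map_smul' := LmapFun_smul i

lemma Lmap_monomial (i : ι) (d : Fin (m + 1) →₀ ℕ) (a : K) :
    (Lmap i (monomial d a) : MvPolynomial (ι × (Fin (m + 1) → ℕ)) R) = a • X (i, ⇑d) :=
  LmapFun_monomial i d a

variable {D : Type} [CommRing D] [Algebra K D]

noncomputable def Tpoly (ε μ : Module.Basis (Fin (m + 1)) K D) (j : Fin (m + 1)) :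
    MvPolynomial (Fin (m + 1)) K :=
  ∑ k : Fin (m + 1), (ε.repr (μ k) j) • X k

noncomputable def Qpoly (ε μ : Module.Basis (Fin (m + 1)) K D) (θ : Fin (m + 1) → ℕ) :
    MvPolynomial (Fin (m + 1)) K :=
  ∏ j : Fin (m + 1), Tpoly ε μ j ^ θ j

lemma Qpoly_succ (ε μ : Module.Basis (Fin (m + 1)) K D) (θ : Fin (m + 1) → ℕ) (j : Fin (m + 1)) :
    Qpoly ε μ (fun l => θ l + if l = j then 1 else 0) = Tpoly ε μ j * Qpoly ε μ θ := by
  unfold Qpoly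
  rw [mul_comm]
  simp only [pow_add, Finset.prod_mul_distrib]
  congr 1
  simp only [pow_ite, pow_one, pow_zero]
  rw [Finset.prod_ite_eq' Finset.univ j (fun l => Tpoly ε μ l)]
  simp

lemma prod_X_pow_univ (d : Fin (m + 1) →₀ ℕ) :
    (∏ j : Fin (m + 1), (X j : MvPolynomial (Fin (m + 1)) K) ^ d j) = monomial d 1 := by
  rw [← prod_X_pow_eq_monomial]
  exact (Finset.prod_subset (Finset.subset_univ _) (by
    intro x _ hx
    simp [Finsupp.notMem_support_iff.mp hx])).symm

lemma aeval_Tpoly (ε μ : Module.Basis (Fin (m + 1)) K D) (j : Fin (m + 1)) :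
    aeval (Tpoly μ ε) (Tpoly ε μ j) = (X j : MvPolynomial (Fin (m + 1)) K) := by
  have key : ∀ l : Fin (m + 1),
      (∑ k : Fin (m + 1), μ.repr (ε l) k * ε.repr (μ k) j) = ε.repr (ε l) j := by
    intro l
    have h := congrArg (fun z => ε.repr z j) (μ.sum_repr (ε l))
    simp only [map_sum, map_smul, Finsupp.coe_finset_sum, Finset.sum_apply,
      Finsupp.smul_apply, smul_eq_mul] at h
    exact h
  have key' : ∀ l : Fin (m + 1),
      (∑ k : Fin (m + 1), ε.repr (μ k) j * μ.repr (ε l) k) = ε.repr (ε l) j := by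
    intro l
    rw [← key l]
    exact Finset.sum_congr rfl fun k _ => mul_comm _ _
  simp only [Tpoly, map_sum, map_smul, aeval_X, Finset.smul_sum, smul_smul]
  rw [Finset.sum_comm]
  simp only [← Finset.sum_smul, key', Module.Basis.repr_self, Finsupp.single_apply]
  simp only [ite_smul, one_smul, zero_smul]
  rw [Finset.sum_ite_eq' Finset.univ j X]
  simp

lemma aeval_Qpoly (ε μ : Module.Basis (Fin (m + 1)) K D) (θ : Fin (m + 1) → ℕ) :
    aeval (Tpoly μ ε) (Qpoly ε μ θ) =
      (monomial (Finsupp.equivFunOnFinite.symm θ) 1 : MvPolynomial (Fin (m + 1)) K) := by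
  simp only [Qpoly, map_prod, map_pow, aeval_Tpoly]
  rw [← prod_X_pow_univ (Finsupp.equivFunOnFinite.symm θ)]
  simp [Finsupp.equivFunOnFinite]
  rfl

lemma hom_Lmap
    (Φ : MvPolynomial (ι × (Fin (m + 1) → ℕ)) R →ₐ[K] MvPolynomial (ι × (Fin (m + 1) → ℕ)) R)
    (U : Fin (m + 1) → MvPolynomial (Fin (m + 1)) K)
    (hΦ : ∀ (i : ι) (d : Fin (m + 1) →₀ ℕ),
      Φ (X (i, ⇑d)) = Lmap i (∏ k : Fin (m + 1), U k ^ d k))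
    (i : ι) (q : MvPolynomial (Fin (m + 1)) K) :
    Φ (Lmap i q) = Lmap i (aeval U q) := by
  induction q using MvPolynomial.induction_on' with
  | monomial d a =>
      have e1 : Φ (a • X (i, ⇑d)) = a • Φ (X (i, ⇑d)) := Φ.toLinearMap.map_smul a _
      rw [Lmap_monomial, e1, hΦ, aeval_monomial, ← Algebra.smul_def,
        Finsupp.prod_fintype _ _ (fun k => pow_zero (U k)), map_smul]
  | add p q hp hq => rw [map_add, map_add, hp, hq, map_add, map_add]

lemma e_Lmap
    (eν : MvPolynomial (ι × (Fin (m + 1) → ℕ)) R →ₐ[K]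
      (MvPolynomial (ι × (Fin (m + 1) → ℕ)) R) ⊗[K] D)
    (ν : Fin (m + 1) → D)
    (hν : ∀ (i : ι) (θ : Fin (m + 1) → ℕ),
      eν (X (i, θ)) = ∑ j : Fin (m + 1),
        (X (i, fun l => θ l + if l = j then 1 else 0) :
          MvPolynomial (ι × (Fin (m + 1) → ℕ)) R) ⊗ₜ[K] ν j)
    (i : ι) (q : MvPolynomial (Fin (m + 1)) K) :
    eν (Lmap i q) = ∑ k : Fin (m + 1), (Lmap i (X k * q) :
      MvPolynomial (ι × (Fin (m + 1) → ℕ)) R) ⊗ₜ[K] ν k := by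
  induction q using MvPolynomial.induction_on' with
  | monomial d a =>
      have hx : ∀ k : Fin (m + 1),
          (X k : MvPolynomial (Fin (m + 1)) K) * monomial d a =
            monomial (Finsupp.single k 1 + d) a := by
        intro k; rw [MvPolynomial.X, monomial_mul, one_mul]
      have hcoe : ∀ k : Fin (m + 1),
          ((Finsupp.single k 1 + d : Fin (m + 1) →₀ ℕ) : Fin (m + 1) → ℕ) =
            fun l => d l + if l = k then 1 else 0 := by
        intro k; funext l
        rcases eq_or_ne l k with h | h
        · subst h; simp [Finsupp.add_apply, Finsupp.single_apply, add_comm]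
        · simp [Finsupp.add_apply, Finsupp.single_apply, h, Ne.symm h]
      have e1 : eν (a • X (i, ⇑d)) = a • eν (X (i, ⇑d)) := eν.toLinearMap.map_smul a _
      rw [Lmap_monomial, e1, hν i ⇑d, Finset.smul_sum]
      refine Finset.sum_congr rfl fun k _ => ?_
      rw [hx k, Lmap_monomial, hcoe k, TensorProduct.smul_tmul']
  | add p q hp hq =>
      rw [map_add, map_add, hp, hq, ← Finset.sum_add_distrib]
      refine Finset.sum_congr rfl fun k _ => ?_
      rw [mul_add, map_add, TensorProduct.add_tmul]

end DStarAux

open DStarAux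


/-- Independence of the `D*`-polynomial ring from the chosen basis:
if `ε` and `μ` are two `K`-bases of `D`, and `eε`, `eμ` are the canonical `D`-structures
on the polynomial ring `R[dᶿxᵢ]` built from `ε` and `μ` respectively (both extending the
`D*`-ring structure `e` of `R`), then the two `D*`-polynomial rings are isomorphic as
`(R, e)`-algebras, i.e. there is an `R`-algebra isomorphism commuting with the
`D`-structures. -/
theorem dStarPolynomial_basis_independent
    {K R D : Type} [Field K] [CommRing R] [Algebra K R]
    [CommRing D] [Algebra K D] [FiniteDimensional K D]
    {m : ℕ} (ε μ : Module.Basis (Fin (m + 1)) K D)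
    (e : R →ₐ[K] R ⊗[K] D)
    -- (R, e) is a D*-ring: commuting coordinate maps (with respect to ε, say)
    (δR : Fin (m + 1) → R → R)
    (hδR : ∀ r : R, e r = ∑ j : Fin (m + 1), δR j r ⊗ₜ[K] ε j)
    (hδRcomm : ∀ (j k : Fin (m + 1)) (r : R), δR j (δR k r) = δR k (δR j r))
    (ι : Type)
    -- the D*-polynomial ring built from the basis ε
    (eε : MvPolynomial (ι × (Fin (m + 1) → ℕ)) R →ₐ[K]
      (MvPolynomial (ι × (Fin (m + 1) → ℕ)) R) ⊗[K] D)
    (hεext : ∀ r : R,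
      eε (algebraMap R (MvPolynomial (ι × (Fin (m + 1) → ℕ)) R) r) =
        Algebra.TensorProduct.map
          (IsScalarTower.toAlgHom K R (MvPolynomial (ι × (Fin (m + 1) → ℕ)) R))
          (AlgHom.id K D) (e r))
    (hεvar : ∀ (i : ι) (θ : Fin (m + 1) → ℕ),
      eε (X (i, θ)) =
        ∑ j : Fin (m + 1),
          (X (i, fun l => θ l + if l = j then 1 else 0) :
            MvPolynomial (ι × (Fin (m + 1) → ℕ)) R) ⊗ₜ[K] ε j)
    -- the D*-polynomial ring built from the basis μ
    (eμ : MvPolynomial (ι × (Fin (m + 1) → ℕ)) R →ₐ[K]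
      (MvPolynomial (ι × (Fin (m + 1) → ℕ)) R) ⊗[K] D)
    (hμext : ∀ r : R,
      eμ (algebraMap R (MvPolynomial (ι × (Fin (m + 1) → ℕ)) R) r) =
        Algebra.TensorProduct.map
          (IsScalarTower.toAlgHom K R (MvPolynomial (ι × (Fin (m + 1) → ℕ)) R))
          (AlgHom.id K D) (e r))
    (hμvar : ∀ (i : ι) (θ : Fin (m + 1) → ℕ),
      eμ (X (i, θ)) =
        ∑ j : Fin (m + 1),
          (X (i, fun l => θ l + if l = j then 1 else 0) :
            MvPolynomial (ι × (Fin (m + 1) → ℕ)) R) ⊗ₜ[K] μ j) :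
    ∃ ψ : MvPolynomial (ι × (Fin (m + 1) → ℕ)) R ≃ₐ[R]
        MvPolynomial (ι × (Fin (m + 1) → ℕ)) R,
      ∀ p : MvPolynomial (ι × (Fin (m + 1) → ℕ)) R,
        eμ (ψ p) =
          Algebra.TensorProduct.map
            (AlgHom.restrictScalars K (ψ : MvPolynomial (ι × (Fin (m + 1) → ℕ)) R →ₐ[R]
              MvPolynomial (ι × (Fin (m + 1) → ℕ)) R))
            (AlgHom.id K D) (eε p) := by
  classical
  let ψ0 : MvPolynomial (ι × (Fin (m + 1) → ℕ)) R →ₐ[R]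
      MvPolynomial (ι × (Fin (m + 1) → ℕ)) R :=
    aeval fun p => Lmap p.1 (Qpoly ε μ p.2)
  let φ0 : MvPolynomial (ι × (Fin (m + 1) → ℕ)) R →ₐ[R]
      MvPolynomial (ι × (Fin (m + 1) → ℕ)) R :=
    aeval fun p => Lmap p.1 (Qpoly μ ε p.2)
  have hψX : ∀ (i : ι) (θ : Fin (m + 1) → ℕ),
      ψ0 (X (i, θ)) = Lmap i (Qpoly ε μ θ) := fun i θ =>
    aeval_X (fun p : ι × (Fin (m + 1) → ℕ) => (Lmap p.1 (Qpoly ε μ p.2) :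
      MvPolynomial (ι × (Fin (m + 1) → ℕ)) R)) (i, θ)
  have hφX : ∀ (i : ι) (θ : Fin (m + 1) → ℕ),
      φ0 (X (i, θ)) = Lmap i (Qpoly μ ε θ) := fun i θ =>
    aeval_X (fun p : ι × (Fin (m + 1) → ℕ) => (Lmap p.1 (Qpoly μ ε p.2) :
      MvPolynomial (ι × (Fin (m + 1) → ℕ)) R)) (i, θ)
  -- the two substitutions are mutually inverse
  have hcompgen : ∀ (ε' μ' : Module.Basis (Fin (m + 1)) K D)
      (Φ : MvPolynomial (ι × (Fin (m + 1) → ℕ)) R →ₐ[R]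
        MvPolynomial (ι × (Fin (m + 1) → ℕ)) R),
      (∀ (i : ι) (θ : Fin (m + 1) → ℕ), Φ (X (i, θ)) = Lmap i (Qpoly μ' ε' θ)) →
      ∀ (i : ι) (θ : Fin (m + 1) → ℕ), Φ (Lmap i (Qpoly ε' μ' θ)) = X (i, θ) := by
    intro ε' μ' Φ hΦ i θ
    have h := hom_Lmap (AlgHom.restrictScalars K Φ) (Tpoly μ' ε')
      (fun i' d => hΦ i' ⇑d) i (Qpoly ε' μ' θ)
    rw [aeval_Qpoly, Lmap_monomial, one_smul] at h
    simpa [Finsupp.equivFunOnFinite] using h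
  have hφψ : φ0.comp ψ0 = AlgHom.id R _ := by
    apply MvPolynomial.algHom_ext
    rintro ⟨i, θ⟩
    rw [AlgHom.comp_apply, AlgHom.id_apply, hψX i θ]
    exact hcompgen ε μ φ0 hφX i θ
  have hψφ : ψ0.comp φ0 = AlgHom.id R _ := by
    apply MvPolynomial.algHom_ext
    rintro ⟨i, θ⟩
    rw [AlgHom.comp_apply, AlgHom.id_apply, hφX i θ]
    exact hcompgen μ ε ψ0 hψX i θ
  let ψ : MvPolynomial (ι × (Fin (m + 1) → ℕ)) R ≃ₐ[R]
      MvPolynomial (ι × (Fin (m + 1) → ℕ)) R :=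
    AlgEquiv.ofAlgHom ψ0 φ0 hψφ hφψ
  refine ⟨ψ, ?_⟩
  set ψK : MvPolynomial (ι × (Fin (m + 1) → ℕ)) R →ₐ[K]
      MvPolynomial (ι × (Fin (m + 1) → ℕ)) R := AlgHom.restrictScalars K ψ0 with hψK
  -- the two sides as K-algebra homomorphisms
  set F : MvPolynomial (ι × (Fin (m + 1) → ℕ)) R →ₐ[K]
      (MvPolynomial (ι × (Fin (m + 1) → ℕ)) R) ⊗[K] D := eμ.comp ψK with hF
  set G : MvPolynomial (ι × (Fin (m + 1) → ℕ)) R →ₐ[K]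
      (MvPolynomial (ι × (Fin (m + 1) → ℕ)) R) ⊗[K] D :=
    (Algebra.TensorProduct.map ψK (AlgHom.id K D)).comp eε with hG
  have hψC : ∀ r : R, ψ0 (C r) = C r := by
    intro r
    rw [← MvPolynomial.algebraMap_eq]
    exact ψ0.commutes r
  have hmaps : (Algebra.TensorProduct.map ψK (AlgHom.id K D)).comp
      (Algebra.TensorProduct.map
        (IsScalarTower.toAlgHom K R (MvPolynomial (ι × (Fin (m + 1) → ℕ)) R))
        (AlgHom.id K D)) =
      Algebra.TensorProduct.map
        (IsScalarTower.toAlgHom K R (MvPolynomial (ι × (Fin (m + 1) → ℕ)) R))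
        (AlgHom.id K D) := by
    have h1 : ψK.comp (IsScalarTower.toAlgHom K R (MvPolynomial (ι × (Fin (m + 1) → ℕ)) R)) =
        IsScalarTower.toAlgHom K R (MvPolynomial (ι × (Fin (m + 1) → ℕ)) R) :=
      AlgHom.ext fun r => ψ0.commutes r
    have h2 : (AlgHom.id K D).comp (AlgHom.id K D) = AlgHom.id K D := AlgHom.id_comp _
    rw [← Algebra.TensorProduct.map_comp, h1, h2]
  have hXcase : ∀ (i : ι) (θ : Fin (m + 1) → ℕ),
      eμ (Lmap i (Qpoly ε μ θ)) =
        ∑ j : Fin (m + 1),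
          (Lmap i (Qpoly ε μ fun l => θ l + if l = j then 1 else 0) :
            MvPolynomial (ι × (Fin (m + 1) → ℕ)) R) ⊗ₜ[K] ε j := by
    intro i θ
    rw [e_Lmap eμ μ hμvar i (Qpoly ε μ θ)]
    have hμrep : ∀ k, (μ k : D) = ∑ j : Fin (m + 1), ε.repr (μ k) j • ε j :=
      fun k => (ε.sum_repr (μ k)).symm
    calc
      ∑ k : Fin (m + 1), (Lmap i (X k * Qpoly ε μ θ) :
          MvPolynomial (ι × (Fin (m + 1) → ℕ)) R) ⊗ₜ[K] μ k
        = ∑ k : Fin (m + 1), ∑ j : Fin (m + 1),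
            (ε.repr (μ k) j • (Lmap i (X k * Qpoly ε μ θ) :
              MvPolynomial (ι × (Fin (m + 1) → ℕ)) R)) ⊗ₜ[K] ε j := by
          refine Finset.sum_congr rfl fun k _ => ?_
          conv_lhs => rw [← ε.sum_repr (μ k)]
          rw [TensorProduct.tmul_sum]
          refine Finset.sum_congr rfl fun j _ => ?_
          rw [TensorProduct.tmul_smul, TensorProduct.smul_tmul']
      _ = ∑ j : Fin (m + 1),
            (∑ k : Fin (m + 1), ε.repr (μ k) j • (Lmap i (X k * Qpoly ε μ θ) :
              MvPolynomial (ι × (Fin (m + 1) → ℕ)) R)) ⊗ₜ[K] ε j := by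
          rw [Finset.sum_comm]
          exact Finset.sum_congr rfl fun j _ => (TensorProduct.sum_tmul ..).symm
      _ = ∑ j : Fin (m + 1),
            (Lmap i (Qpoly ε μ fun l => θ l + if l = j then 1 else 0) :
              MvPolynomial (ι × (Fin (m + 1) → ℕ)) R) ⊗ₜ[K] ε j := by
          refine Finset.sum_congr rfl fun j _ => ?_
          congr 1
          have : (∑ k : Fin (m + 1), ε.repr (μ k) j • (X k * Qpoly ε μ θ)) =
              Tpoly ε μ j * Qpoly ε μ θ := by
            rw [Tpoly, Finset.sum_mul]
            exact Finset.sum_congr rfl fun k _ => (smul_mul_assoc _ _ _).symm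
          rw [Qpoly_succ ε μ θ j, ← this, map_sum]
          exact Finset.sum_congr rfl fun k _ => (map_smul (Lmap i) _ _).symm
  have hψKapp : ∀ x, ψK x = ψ0 x := fun _ => rfl
  have hFG : F = G := by
    have hRing : (F : MvPolynomial (ι × (Fin (m + 1) → ℕ)) R →+*
        (MvPolynomial (ι × (Fin (m + 1) → ℕ)) R) ⊗[K] D) = G := by
      refine MvPolynomial.ringHom_ext ?_ ?_
      · intro r
        show F (C r) = G (C r)
        have h1 : F (C r) = eμ (C r) := by
          rw [hF, AlgHom.comp_apply, hψKapp, hψC r]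
        have h2 : G (C r) =
            Algebra.TensorProduct.map ψK (AlgHom.id K D) (eε (C r)) := rfl
        rw [h1, h2, ← MvPolynomial.algebraMap_eq, hμext r, hεext r]
        exact (AlgHom.congr_fun hmaps (e r)).symm
      · rintro ⟨i, θ⟩
        show F (X (i, θ)) = G (X (i, θ))
        have h1 : F (X (i, θ)) = eμ (Lmap i (Qpoly ε μ θ)) := by
          rw [hF, AlgHom.comp_apply, hψKapp, hψX i θ]
        have h2 : G (X (i, θ)) =
            Algebra.TensorProduct.map ψK (AlgHom.id K D) (eε (X (i, θ))) := rfl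
        rw [h1, hXcase i θ, h2, hεvar i θ, map_sum]
        refine Finset.sum_congr rfl fun j _ => ?_
        rw [Algebra.TensorProduct.map_tmul, hψKapp, hψX i _, AlgHom.coe_id, id_eq]
    exact AlgHom.ext fun p => RingHom.congr_fun hRing p
  intro p
  have hcoe : (AlgHom.restrictScalars K
      ((ψ : MvPolynomial (ι × (Fin (m + 1) → ℕ)) R →ₐ[R]
        MvPolynomial (ι × (Fin (m + 1) → ℕ)) R))) = ψK := rfl
  rw [hcoe]
  exact AlgHom.congr_fun hFG p
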